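/- Let p ≥ 0 be an integer and define B(λ,μ) = (λ^{p+1} − μ^{p+1})/(λ−μ) for λ ≠ μ and B(λ,λ) = (p+1)λ^p. Then for all λ ≥ 0, μ ≥ 0 with λ² + μ² > 0, B(λ,μ) + 2·∂_λB(λ,μ)·(λ − √(λμ)) > 0. -/

import Mathlib

open Finset

-- Key sum-of-squares identity
lemma key_identity (a b : ℝ) (p : ℕ) :
    (∑ i ∈ range (p+1), (a^2)^i * (b^2)^(p-i))
      + 2 * (∑ i ∈ range (p+1), (i : ℝ) * (a^2)^(i-1) * (b^2)^(p-i)) * (a^2 - a*b)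
    = (∑ k ∈ range p, ((k : ℝ)+1) * (a^(k+1) * b^(p-1-k) - a^k * b^(p-k))^2)
      + ((p : ℝ)+1) * (a^2)^p := by
  induction p with
  | zero => simp
  | succ p ih =>
    have h1 : ∀ i ∈ range (p+1),
        (a^2)^i * (b^2)^(p+1-i) = b^2 * ((a^2)^i * (b^2)^(p-i)) := by
      intro i hi
      rw [mem_range] at hi
      have h : p+1-i = (p-i)+1 := by omega
      rw [h, pow_succ]; ring
    have h2 : ∀ i ∈ range (p+1),
        (i : ℝ) * (a^2)^(i-1) * (b^2)^(p+1-i)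
          = b^2 * ((i : ℝ) * (a^2)^(i-1) * (b^2)^(p-i)) := by
      intro i hi
      rw [mem_range] at hi
      have h : p+1-i = (p-i)+1 := by omega
      rw [h, pow_succ]; ring
    have h3 : ∀ k ∈ range p,
        ((k : ℝ)+1) * (a^(k+1) * b^(p+1-1-k) - a^k * b^(p+1-k))^2
          = b^2 * (((k : ℝ)+1) * (a^(k+1) * b^(p-1-k) - a^k * b^(p-k))^2) := by
      intro k hk
      rw [mem_range] at hk
      have e1 : p+1-1-k = (p-1-k)+1 := by omega
      have e2 : p+1-k = (p-k)+1 := by omega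
      rw [e1, e2, pow_succ, pow_succ]; ring
    have hP : ∑ i ∈ range (p+1+1), (a^2)^i * (b^2)^(p+1-i)
        = b^2 * (∑ i ∈ range (p+1), (a^2)^i * (b^2)^(p-i)) + (a^2)^(p+1) := by
      rw [sum_range_succ, sum_congr rfl h1, ← mul_sum, Nat.sub_self, pow_zero, mul_one]
    have hD : ∑ i ∈ range (p+1+1), (i : ℝ) * (a^2)^(i-1) * (b^2)^(p+1-i)
        = b^2 * (∑ i ∈ range (p+1), (i : ℝ) * (a^2)^(i-1) * (b^2)^(p-i))
          + ((p:ℝ)+1) * (a^2)^p := by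
      rw [sum_range_succ, sum_congr rfl h2, ← mul_sum, Nat.sub_self, pow_zero,
        Nat.add_sub_cancel]
      push_cast; ring
    have hQ : ∑ k ∈ range (p+1), ((k : ℝ)+1) * (a^(k+1) * b^(p+1-1-k) - a^k * b^(p+1-k))^2
        = b^2 * (∑ k ∈ range p, ((k : ℝ)+1) * (a^(k+1) * b^(p-1-k) - a^k * b^(p-k))^2)
          + ((p:ℝ)+1) * (a^(p+1) - a^p * b)^2 := by
      rw [sum_range_succ, sum_congr rfl h3, ← mul_sum]
      have e3 : p+1-1-p = 0 := by omega
      have e4 : p+1-p = 1 := by omega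
      rw [e3, e4, pow_zero, pow_one, mul_one]
    rw [hP, hD, hQ]
    push_cast
    linear_combination (b^2) * ih

theorem stmt3 (p : ℕ) (B : ℝ → ℝ → ℝ)
    (hB : ∀ l m : ℝ, B l m =
      if l = m then (p + 1) * l ^ p else (l ^ (p + 1) - m ^ (p + 1)) / (l - m))
    (l m : ℝ) (hl : 0 ≤ l) (hm : 0 ≤ m) (hlm : 0 < l ^ 2 + m ^ 2) :
    0 < B l m + 2 * deriv (fun x => B x m) l * (l - Real.sqrt (l * m)) := by
  -- B equals the polynomial ∑ x^i m^(p-i)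
  have hBeq : ∀ x : ℝ, B x m = ∑ i ∈ range (p+1), x^i * m^(p-i) := by
    intro x
    rw [hB]
    split_ifs with h
    · subst h
      have hc : ∀ i ∈ range (p+1), x^i * x^(p-i) = x^p := by
        intro i hi
        rw [mem_range] at hi
        rw [← pow_add]
        congr 1
        omega
      rw [sum_congr rfl hc, sum_const, card_range, nsmul_eq_mul]
      push_cast; ring
    · have hg := geom_sum₂_mul x m (p+1)
      simp only [Nat.add_sub_cancel] at hg
      rw [div_eq_iff (sub_ne_zero.mpr h), ← hg]
  have hfun : (fun x => B x m) = fun x => ∑ i ∈ range (p+1), x^i * m^(p-i) :=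
    funext hBeq
  rw [hfun, hBeq]
  rcases eq_or_lt_of_le hl with h0 | h0
  · -- l = 0, so m > 0
    have hm' : 0 < m := by nlinarith
    rw [← h0, zero_mul, Real.sqrt_zero, sub_zero, mul_zero, add_zero]
    rw [Finset.sum_range_succ']
    simp only [pow_succ, mul_zero, zero_mul, zero_pow, Finset.sum_const_zero]
    simp
    positivity
  · -- l > 0
    have ha2 : (Real.sqrt l)^2 = l := Real.sq_sqrt hl
    have hb2 : (Real.sqrt m)^2 = m := Real.sq_sqrt hm
    have ha : 0 < Real.sqrt l := Real.sqrt_pos.mpr h0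
    have hs : Real.sqrt (l * m) = Real.sqrt l * Real.sqrt m := Real.sqrt_mul hl m
    have hderiv : deriv (fun x => ∑ i ∈ range (p+1), x^i * m^(p-i)) l
        = ∑ i ∈ range (p+1), (i : ℝ) * l^(i-1) * m^(p-i) := by
      apply HasDerivAt.deriv
      apply HasDerivAt.fun_sum
      intro i _
      simpa [mul_assoc] using (hasDerivAt_pow i l).mul_const (m^(p-i))
    rw [hderiv, hs]
    have key := key_identity (Real.sqrt l) (Real.sqrt m) p
    rw [ha2, hb2] at key
    have hq : 0 ≤ ∑ k ∈ range p, ((k : ℝ)+1) *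
        ((Real.sqrt l)^(k+1) * (Real.sqrt m)^(p-1-k) - (Real.sqrt l)^k * (Real.sqrt m)^(p-k))^2 := by
      apply Finset.sum_nonneg
      intro k _
      positivity
    nlinarith [pow_pos h0 p, key]
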